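/- Let G be a GFP sequence of Fibonacci type with gcd(d, g) a unit, and let m ≥ 1 and n ≥ 2. Then gcd(a₁, b₃) · gcd(b₁, a₃) is associated to c · G(2)^e, where c = G(m+1)·G(n−1) is the interior point of the star of David and e is the number of even integers among m and n (so the product equals c, c·G(2), or c·G(2)² according as neither, exactly one, or both of m, n are even). -/

import Mathlib

open Polynomial

private lemma gcd_mul_coprime {α : Type*} [CommMonoidWithZero α] [GCDMonoid α]
    (k m n : α) (h : IsUnit (gcd k n)) :
    Associated (gcd k (m * n)) (gcd k m) := by
  apply associated_of_dvd_dvd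
  · exact (gcd_mul_dvd_mul_gcd k m n).trans ((h.mul_right_dvd).mpr dvd_rfl)
  · exact dvd_gcd (gcd_dvd_left k m) ((gcd_dvd_right k m).trans (dvd_mul_right m n))

private lemma gcd_add_mul_cancel {β : Type*} [CommRing β] [IsDomain β] [GCDMonoid β]
    (a b c : β) : Associated (gcd a (b + c * a)) (gcd a b) := by
  apply associated_of_dvd_dvd
  · exact dvd_gcd (gcd_dvd_left _ _)
      (by have h1 := gcd_dvd_right a (b + c * a)
          have h2 := gcd_dvd_left a (b + c * a)
          have := dvd_sub h1 (h2.mul_left c)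
          simpa using this)
  · exact dvd_gcd (gcd_dvd_left _ _)
      (dvd_add (gcd_dvd_right a b) ((gcd_dvd_left a b).mul_left c))

section GFP

variable (d g : Polynomial ℤ) (G : ℕ → Polynomial ℤ)

private lemma gfp_rec (hrec : ∀ n : ℕ, 2 ≤ n → G n = d * G (n - 1) + g * G (n - 2))
    (k : ℕ) : G (k + 2) = d * G (k + 1) + g * G k := by
  have := hrec (k + 2) (by omega)
  simpa using this

private lemma gfp_coprime_g (h1 : G 1 = 1)
    (hrec : ∀ n : ℕ, 2 ≤ n → G n = d * G (n - 1) + g * G (n - 2))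
    (hdg : IsUnit (gcd d g)) :
    ∀ k : ℕ, IsUnit (gcd (G (k + 1)) g) := by
  intro k
  induction k with
  | zero => exact isUnit_of_dvd_one (by rw [h1]; exact gcd_dvd_left 1 g)
  | succ k ih =>
    have hr := gfp_rec d g G hrec k
    have e1 : Associated (gcd (G (k + 2)) g) (gcd g (G (k + 2))) := gcd_comm' _ _
    have e2 : Associated (gcd g (G (k + 2))) (gcd g (d * G (k + 1))) := by
      rw [hr, show d * G (k+1) + g * G k = d * G (k+1) + G k * g by ring]
      exact gcd_add_mul_cancel g (d * G (k + 1)) (G k)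
    have e3 : Associated (gcd g (d * G (k + 1))) (gcd g (G (k + 1))) := by
      rw [show d * G (k+1) = G (k+1) * d by ring]
      exact gcd_mul_coprime g (G (k + 1)) d ((gcd_comm' d g).isUnit hdg)
    have e4 : Associated (gcd g (G (k + 1))) (gcd (G (k + 1)) g) := gcd_comm' _ _
    exact ((((e1.trans e2).trans e3).trans e4).symm.isUnit ih)

private lemma gfp_coprime_consec (h0 : G 0 = 0) (h1 : G 1 = 1)
    (hrec : ∀ n : ℕ, 2 ≤ n → G n = d * G (n - 1) + g * G (n - 2))
    (hdg : IsUnit (gcd d g)) :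
    ∀ k : ℕ, IsUnit (gcd (G k) (G (k + 1))) := by
  intro k
  induction k with
  | zero =>
    rw [h0, h1]
    exact (gcd_zero_left' (1 : Polynomial ℤ)).symm.isUnit isUnit_one
  | succ k ih =>
    have hr := gfp_rec d g G hrec k
    have e1 : Associated (gcd (G (k+1)) (G (k+2))) (gcd (G (k+1)) (g * G k)) := by
      rw [hr, show d * G (k+1) + g * G k = g * G k + d * G (k+1) by ring]
      exact gcd_add_mul_cancel (G (k+1)) (g * G k) d
    have e2 : Associated (gcd (G (k+1)) (g * G k)) (gcd (G (k+1)) (G k)) := by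
      rw [show g * G k = G k * g by ring]
      exact gcd_mul_coprime _ _ _ (gfp_coprime_g d g G h1 hrec hdg k)
    have e3 : Associated (gcd (G (k+1)) (G k)) (gcd (G k) (G (k+1))) := gcd_comm' _ _
    exact ((e1.trans e2).trans e3).symm.isUnit ih

private lemma gfp_gcd_d (h0 : G 0 = 0) (h1 : G 1 = 1)
    (hrec : ∀ n : ℕ, 2 ≤ n → G n = d * G (n - 1) + g * G (n - 2))
    (hdg : IsUnit (gcd d g)) :
    ∀ k : ℕ, (Even k → d ∣ G k) ∧ (¬ Even k → IsUnit (gcd (G k) d)) := by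
  have key : ∀ k : ℕ,
      ((Even k → d ∣ G k) ∧ (¬ Even k → IsUnit (gcd (G k) d))) ∧
      ((Even (k+1) → d ∣ G (k+1)) ∧ (¬ Even (k+1) → IsUnit (gcd (G (k+1)) d))) := by
    intro k
    induction k with
    | zero =>
      refine ⟨⟨fun _ => by rw [h0]; exact dvd_zero d, fun h => absurd Even.zero h⟩,
        ⟨fun h => by simp at h, fun _ => ?_⟩⟩
      rw [h1]
      exact isUnit_of_dvd_one (gcd_dvd_left 1 d)
    | succ k ih =>
      refine ⟨ih.2, ?_, ?_⟩
      · intro hev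
        have hk : Even k := by
          rcases hev with ⟨j, hj⟩
          exact ⟨j - 1, by omega⟩
        have hr := gfp_rec d g G hrec k
        rw [hr]
        exact dvd_add (dvd_mul_right d _) ((ih.1.1 hk).mul_left g)
      · intro hodd
        have hk : ¬ Even k := by
          intro ⟨j, hj⟩; exact hodd ⟨j + 1, by omega⟩
        have hr := gfp_rec d g G hrec k
        have e1 : Associated (gcd (G (k+2)) d) (gcd d (G (k+2))) := gcd_comm' _ _
        have e2 : Associated (gcd d (G (k+2))) (gcd d (g * G k)) := by
          rw [hr, show d * G (k+1) + g * G k = g * G k + G (k+1) * d by ring]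
          exact gcd_add_mul_cancel d (g * G k) (G (k+1))
        have e3 : Associated (gcd d (g * G k)) (gcd d (G k)) := by
          rw [show g * G k = G k * g by ring]
          exact gcd_mul_coprime d (G k) g hdg
        have e4 : Associated (gcd d (G k)) (gcd (G k) d) := gcd_comm' _ _
        exact ((((e1.trans e2).trans e3).trans e4).symm.isUnit (ih.1.2 hk))
  exact fun k => (key k).1

private lemma gfp_gcd_two_apart (h0 : G 0 = 0) (h1 : G 1 = 1)
    (hrec : ∀ n : ℕ, 2 ≤ n → G n = d * G (n - 1) + g * G (n - 2))
    (hdg : IsUnit (gcd d g)) (k : ℕ) :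
    Associated (gcd (G k) (G (k + 2))) (d ^ (if Even k then 1 else 0)) := by
  have hr := gfp_rec d g G hrec k
  have e1 : Associated (gcd (G k) (G (k+2))) (gcd (G k) (d * G (k+1))) := by
    rw [hr]
    exact gcd_add_mul_cancel (G k) (d * G (k+1)) g
  have e2 : Associated (gcd (G k) (d * G (k+1))) (gcd (G k) d) :=
    gcd_mul_coprime (G k) d (G (k+1)) (gfp_coprime_consec d g G h0 h1 hrec hdg k)
  by_cases hk : Even k
  · have hdvd : d ∣ G k := (gfp_gcd_d d g G h0 h1 hrec hdg k).1 hk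
    have e3 : Associated (gcd (G k) d) d :=
      associated_of_dvd_dvd (gcd_dvd_right _ _) (dvd_gcd hdvd dvd_rfl)
    simp only [hk, if_pos, pow_one]
    exact (e1.trans e2).trans e3
  · have hu : IsUnit (gcd (G k) d) := (gfp_gcd_d d g G h0 h1 hrec hdg k).2 hk
    simp only [hk, if_neg, not_false_iff, pow_zero]
    exact (e1.trans e2).trans (associated_one_iff_isUnit.mpr hu)

end GFP

theorem star_of_david_interior_point (d g : Polynomial ℤ) (hd : d ≠ 0) (hg : g ≠ 0)
    (G : ℕ → Polynomial ℤ) (h0 : G 0 = 0) (h1 : G 1 = 1)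
    (hrec : ∀ n : ℕ, 2 ≤ n → G n = d * G (n - 1) + g * G (n - 2))
    (hdg : IsUnit (gcd d g))
    (m n : ℕ) (hm : 1 ≤ m) (hn : 2 ≤ n) :
    Associated
      (gcd (G (m + 1) * G (n - 2)) (G (m + 1) * G n) *
        gcd (G m * G (n - 1)) (G (m + 2) * G (n - 1)))
      (G (m + 1) * G (n - 1) *
        G 2 ^ ((if Even m then 1 else 0) + (if Even n then 1 else 0))) := by
  obtain ⟨k, rfl⟩ : ∃ k, n = k + 2 := ⟨n - 2, by omega⟩
  have hG2 : G 2 = d := by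
    have := hrec 2 le_rfl
    simp [h0, h1] at this
    simpa using this
  have hsub2 : k + 2 - 2 = k := by omega
  have hsub1 : k + 2 - 1 = k + 1 := by omega
  rw [hsub2, hsub1, hG2]
  have hevn : (if Even (k + 2) then 1 else 0) = (if Even k then 1 else 0) := by
    simp [Nat.even_add_one, parity_simps]
  rw [hevn]
  have A1 : Associated (gcd (G (m+1) * G k) (G (m+1) * G (k+2)))
      (G (m+1) * gcd (G k) (G (k+2))) := gcd_mul_left' _ _ _
  have A2 : Associated (gcd (G m * G (k+1)) (G (m+2) * G (k+1)))
      (gcd (G m) (G (m+2)) * G (k+1)) := gcd_mul_right' _ _ _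
  have B1 := gfp_gcd_two_apart d g G h0 h1 hrec hdg k
  have B2 := gfp_gcd_two_apart d g G h0 h1 hrec hdg m
  have C : Associated
      (gcd (G (m+1) * G k) (G (m+1) * G (k+2)) * gcd (G m * G (k+1)) (G (m+2) * G (k+1)))
      ((G (m+1) * d ^ (if Even k then 1 else 0)) *
        (d ^ (if Even m then 1 else 0) * G (k+1))) :=
    (A1.mul_mul A2).trans
      (((Associated.refl (G (m+1))).mul_mul B1).mul_mul (B2.mul_mul (Associated.refl (G (k+1)))))
  have hE : (G (m+1) * d ^ (if Even k then 1 else 0)) *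
      (d ^ (if Even m then 1 else 0) * G (k+1)) =
      G (m+1) * G (k+1) * d ^ ((if Even m then 1 else 0) + (if Even k then 1 else 0)) := by
    rw [pow_add]; ring
  rw [hE] at C
  exact C
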